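/- Let S ∈ ℚ⟦X⟧ be the power series with coeff n S = 1/(n+1)! for n even and coeff n S = 0 for n odd. Then for every integer q ≥ 2, coeff (2q−2) ( S · ((rescale (1/2) S)⁻¹)^{2q} ) = 0. -/

import Mathlib

open PowerSeries


lemma constCoeff_rescale_exp (c : ℚ) : constantCoeff (rescale c (exp ℚ)) = 1 := by
  rw [← coeff_zero_eq_constantCoeff, coeff_rescale, coeff_exp]
  simp

lemma key (S : PowerSeries ℚ)
    (hS : ∀ n : ℕ, coeff n S =
      if Even n then ((Nat.factorial (n + 1) : ℚ))⁻¹ else 0) :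
    S = rescale (1/2 : ℚ) S * (rescale (1/2 : ℚ) S + X * d⁄dX ℚ (rescale (1/2 : ℚ) S)) := by
  set G := rescale (1/2 : ℚ) S with hG
  set E := rescale (1/2 : ℚ) (exp ℚ) with hE
  set F := rescale (-(1/2) : ℚ) (exp ℚ) with hF
  have hXG : X * G = E - F := by
    ext n
    rcases n with _ | n
    · rw [map_sub]
      simp [hE, hF, constCoeff_rescale_exp]
    · rw [coeff_succ_X_mul, map_sub, hG, hE, hF, coeff_rescale, coeff_rescale, coeff_rescale,
        hS n]
      simp only [coeff_exp, Algebra.algebraMap_self_apply]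
      rcases Nat.even_or_odd n with h | h
      · rw [if_pos h]
        have : (-(1/2 : ℚ)) ^ (n+1) = -((1/2 : ℚ)^(n+1)) := by
          rw [neg_pow, (h.add_one).neg_one_pow]
          ring
        rw [this, pow_succ]
        ring
      · rw [if_neg (by simpa using h)]
        have : (-(1/2 : ℚ)) ^ (n+1) = (1/2 : ℚ)^(n+1) := by
          rw [neg_pow, (h.add_one).neg_one_pow, one_mul]
        rw [this]
        ring
  have hXS : (2 : ℚ⟦X⟧) * (X * S) = rescale (1 : ℚ) (exp ℚ) - rescale (-1 : ℚ) (exp ℚ) := by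
    ext n
    rcases n with _ | n
    · rw [map_sub]
      simp [constCoeff_rescale_exp]
    · have h2 : ((coeff (n+1)) ((2 : ℚ⟦X⟧) * (X * S))) = 2 * coeff n S := by
        have h' : (2 : ℚ⟦X⟧) = C 2 := (map_ofNat (C (R := ℚ)) 2).symm
        rw [h', coeff_C_mul, coeff_succ_X_mul]
      rw [h2, map_sub, coeff_rescale, coeff_rescale, hS n]
      simp only [coeff_exp, Algebra.algebraMap_self_apply, one_pow, one_mul]
      rcases Nat.even_or_odd n with h | h
      · rw [if_pos h]
        have : (-(1 : ℚ)) ^ (n+1) = -1 := (h.add_one).neg_one_pow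
        rw [this]
        ring
      · rw [if_neg (by simpa using h)]
        have : (-(1 : ℚ)) ^ (n+1) = 1 := (h.add_one).neg_one_pow
        rw [this]
        ring
  have hD : d⁄dX ℚ (X * G) = G + X * d⁄dX ℚ G := by
    rw [Derivation.leibniz, derivative_X]
    simp only [smul_eq_mul, mul_one]
    ring
  have hdE : d⁄dX ℚ E = C (1/2) * E := by
    ext n
    rw [coeff_derivative, hE, coeff_rescale, coeff_C_mul, coeff_rescale]
    simp only [coeff_exp, Algebra.algebraMap_self_apply]
    rw [Nat.factorial_succ, pow_succ]
    push_cast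
    have h1 : ((n:ℚ)+1) ≠ 0 := by positivity
    have h2 : ((Nat.factorial n : ℚ)) ≠ 0 := by exact_mod_cast Nat.factorial_ne_zero n
    field_simp
  have hdF : d⁄dX ℚ F = C (-(1/2)) * F := by
    ext n
    rw [coeff_derivative, hF, coeff_rescale, coeff_C_mul, coeff_rescale]
    simp only [coeff_exp, Algebra.algebraMap_self_apply]
    rw [Nat.factorial_succ, pow_succ]
    push_cast
    have h1 : ((n:ℚ)+1) ≠ 0 := by positivity
    have h2 : ((Nat.factorial n : ℚ)) ≠ 0 := by exact_mod_cast Nat.factorial_ne_zero n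
    field_simp
  have hsum : G + X * d⁄dX ℚ G = C (1/2) * (E + F) := by
    rw [← hD, hXG, map_sub, hdE, hdF, map_neg]
    ring
  have hE2 : E * E = rescale (1 : ℚ) (exp ℚ) := by
    rw [hE, exp_mul_exp_eq_exp_add]; norm_num
  have hF2 : F * F = rescale (-1 : ℚ) (exp ℚ) := by
    rw [hF, exp_mul_exp_eq_exp_add]; norm_num
  have h2ne : (2 : ℚ⟦X⟧) ≠ 0 := by
    intro h
    have := congrArg (constantCoeff) h
    rw [map_ofNat] at this
    norm_num at this
  have hmain : X * S = X * (G * (G + X * d⁄dX ℚ G)) := by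
    have h1 : (2 : ℚ⟦X⟧) * (X * (G * (G + X * d⁄dX ℚ G)))
        = (X * G) * (C (1/2) * (E + F)) * 2 := by rw [hsum]; ring
    have hhalf : (C (1/2)) * (2 : ℚ⟦X⟧) = 1 := by
      have h' : (2 : ℚ⟦X⟧) = C 2 := (map_ofNat (C (R := ℚ)) 2).symm
      rw [h', ← map_mul]; norm_num
    have h2 : (X * G) * (C (1/2) * (E + F)) * 2 = (E - F) * (E + F) := by
      rw [hXG]
      calc (E - F) * (C (1/2) * (E + F)) * 2 = (E - F) * (E + F) * (C (1/2) * 2) := by ring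
        _ = (E - F) * (E + F) := by rw [hhalf, mul_one]
    have h3 : (E - F) * (E + F) = rescale (1:ℚ) (exp ℚ) - rescale (-1:ℚ) (exp ℚ) := by
      rw [← hE2, ← hF2]; ring
    have := h1.trans (h2.trans (h3.trans hXS.symm))
    exact (mul_left_cancel₀ h2ne this).symm
  exact mul_left_cancel₀ X_ne_zero hmain

/-- Let `S ∈ ℚ⟦X⟧` be the Taylor series of `sinh(u)/u`
(`coeff n S = 1/(n+1)!` for even `n`, `0` for odd `n`). Then for every `q ≥ 2`,
the coefficient of `X^(2q-2)` in `S * ((rescale (1/2) S)⁻¹)^(2q)` vanishes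
(vanishing of the Â-genus of `Sp_q/(Sp_1 × Sp_{q-1})`). -/
theorem coeff_Ahat_KP_eq_zero (S : PowerSeries ℚ)
    (hS : ∀ n : ℕ, coeff n S =
      if Even n then ((Nat.factorial (n + 1) : ℚ))⁻¹ else 0) :
    ∀ q : ℕ, 2 ≤ q →
      coeff (2 * q - 2) (S * ((rescale (1 / 2 : ℚ) S)⁻¹) ^ (2 * q)) = 0 := by
  have key := key S hS
  intro q hq
  obtain ⟨r, rfl⟩ : ∃ r, q = r + 2 := ⟨q - 2, by omega⟩
  set G := rescale (1/2 : ℚ) S with hGdef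
  set B := G⁻¹ with hBdef
  have hc : constantCoeff G = 1 := by
    rw [hGdef, ← coeff_zero_eq_constantCoeff, coeff_rescale, hS 0]
    norm_num
  have hGB : G * B = 1 := PowerSeries.mul_inv_cancel G (by rw [hc]; norm_num)
  have hm : 2 * (r + 2) - 2 = 2*r + 2 := by omega
  have hp : 2 * (r + 2) = 2*r + 4 := by omega
  rw [hm, hp]
  set dG := d⁄dX ℚ G with hdG
  have h1 : S * B ^ (2*r+4) = B ^ (2*r+2) + X * (dG * B ^ (2*r+3)) := by
    calc S * B ^ (2*r+4) = (G * (G + X * dG)) * B ^ (2*r+4) := by rw [← key]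
      _ = (G*B)*(G*B) * B^(2*r+2) + X * (dG * ((G*B) * B^(2*r+3))) := by ring
      _ = B ^ (2*r+2) + X * (dG * B ^ (2*r+3)) := by rw [hGB]; ring
  rw [h1, map_add, coeff_succ_X_mul]
  -- derivative of B^(2r+2)
  have hdB : d⁄dX ℚ B = -(B^2) * dG := by
    rw [hBdef, derivative_inv']
  have hpow : d⁄dX ℚ (B ^ (2*r+2)) = -((2*r+2 : ℕ) • (dG * B ^ (2*r+3))) := by
    rw [Derivation.leibniz_pow, hdB]
    have : (2*r+2) - 1 = 2*r+1 := by omega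
    rw [this]
    simp only [smul_eq_mul, nsmul_eq_mul]
    ring
  have hco : coeff (2*r+1) (d⁄dX ℚ (B ^ (2*r+2)))
      = coeff (2*r+2) (B ^ (2*r+2)) * (2*r+2 : ℕ) := by
    rw [coeff_derivative]
    push_cast
    ring
  rw [hpow] at hco
  have hne : ((2*r+2 : ℕ) : ℚ) ≠ 0 := by positivity
  have : coeff (2*r+1) (dG * B ^ (2*r+3)) = -coeff (2*r+2) (B ^ (2*r+2)) := by
    have h2 : -(((2*r+2 : ℕ) : ℚ) * coeff (2*r+1) (dG * B ^ (2*r+3)))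
        = coeff (2*r+2) (B ^ (2*r+2)) * (2*r+2 : ℕ) := by
      rw [← hco, map_neg, ← nsmul_eq_mul, ← map_nsmul]
    have h3 : ((2*r+2 : ℕ) : ℚ) * coeff (2*r+1) (dG * B ^ (2*r+3))
        = ((2*r+2 : ℕ) : ℚ) * (-coeff (2*r+2) (B ^ (2*r+2))) := by
      push_cast at h2 ⊢
      linarith
    exact mul_left_cancel₀ hne h3
  rw [this]
  ring
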